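/- Let A be a semipositive n×m real matrix with rank(A) < m. Then there exists a column index r such that the n×(m−1) matrix obtained from A by deleting column r is again semipositive. -/

import Mathlib

def Matrix.IsSemipositive {n m : ℕ} (A : Matrix (Fin n) (Fin m) ℝ) : Prop :=
  ∃ v : Fin m → ℝ, (∀ j, 0 < v j) ∧ ∀ i, 0 < A.mulVec v i

/-- If a semipositive matrix has rank smaller than its number of columns, then some column
can be deleted preserving semipositivity. -/
theorem semipositive_delete_column {n m : ℕ} (A : Matrix (Fin n) (Fin (m + 1)) ℝ)
    (hS : A.IsSemipositive) (hr : A.rank < m + 1) :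
    ∃ r : Fin (m + 1), (A.submatrix id r.succAbove).IsSemipositive := by
  obtain ⟨v, hv, hAv⟩ := hS
  -- a nonzero kernel vector
  have hker : ∃ w : Fin (m + 1) → ℝ, w ≠ 0 ∧ A.mulVec w = 0 := by
    have h1 : Module.finrank ℝ (LinearMap.range A.mulVecLin)
        + Module.finrank ℝ (LinearMap.ker A.mulVecLin) = m + 1 := by
      rw [LinearMap.finrank_range_add_finrank_ker]
      simp [Module.finrank_fintype_fun_eq_card]
    have h2 : 0 < Module.finrank ℝ (LinearMap.ker A.mulVecLin) := by
      have : A.rank = Module.finrank ℝ (LinearMap.range A.mulVecLin) := rfl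
      omega
    have hne : LinearMap.ker A.mulVecLin ≠ ⊥ := by
      intro h
      rw [h] at h2
      simp at h2
    obtain ⟨w, hw, hwne⟩ := Submodule.exists_mem_ne_zero_of_ne_bot hne
    exact ⟨w, hwne, hw⟩
  obtain ⟨w0, hw0ne, hw0ker⟩ := hker
  -- get a kernel vector with a positive entry
  obtain ⟨j0, hj0⟩ : ∃ j, w0 j ≠ 0 := by
    by_contra h; push_neg at h; exact hw0ne (funext fun j => h j)
  obtain ⟨w, hwker, hwpos⟩ : ∃ w : Fin (m + 1) → ℝ, A.mulVec w = 0 ∧ ∃ j, 0 < w j := by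
    rcases lt_or_gt_of_ne hj0 with h | h
    · exact ⟨-w0, by simp [Matrix.mulVec_neg, hw0ker], j0, by simpa using h⟩
    · exact ⟨w0, hw0ker, j0, h⟩
  classical
  set S : Finset (Fin (m + 1)) := Finset.univ.filter (fun j => 0 < w j) with hSdef
  have hSne : S.Nonempty := by
    obtain ⟨j, hj⟩ := hwpos
    exact ⟨j, by simp [hSdef, hj]⟩
  set t : ℝ := S.inf' hSne (fun j => v j / w j) with htdef
  obtain ⟨r, hrS, hrt⟩ := Finset.exists_mem_eq_inf' hSne (fun j => v j / w j)
  have hwr : 0 < w r := by simpa [hSdef] using hrS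
  have htr : t = v r / w r := hrt
  have htpos : 0 < t := by
    rw [htr]
    exact div_pos (hv r) hwr
  set u : Fin (m + 1) → ℝ := fun j => v j - t * w j with hudef
  have hunn : ∀ j, 0 ≤ u j := by
    intro j
    rcases le_or_gt (w j) 0 with h | h
    · have : t * w j ≤ 0 := mul_nonpos_of_nonneg_of_nonpos htpos.le h
      have := (hv j).le
      simp only [hudef]; linarith
    · have hjS : j ∈ S := by simp [hSdef, h]
      have : t ≤ v j / w j := by rw [htdef]; exact Finset.inf'_le _ hjS
      have h2 : t * w j ≤ v j := (le_div_iff₀ h).mp this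
      simp only [hudef]; linarith
  have hur : u r = 0 := by
    simp only [hudef, htr]
    field_simp
    ring
  have hAu : A.mulVec u = A.mulVec v := by
    have : u = v - t • w := by funext j; simp [hudef, smul_eq_mul]
    rw [this, Matrix.mulVec_sub, Matrix.mulVec_smul, hwker]
    simp
  -- key identity for the submatrix
  have key : ∀ i, (A.submatrix id r.succAbove).mulVec (fun j => u (r.succAbove j)) i
      = A.mulVec v i := by
    intro i
    rw [← hAu]
    simp only [Matrix.mulVec, dotProduct, Matrix.submatrix_apply, id]
    rw [Fin.sum_univ_succAbove (fun j => A i j * u j) r, hur]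
    ring
  -- choose ε
  set s : Fin n → ℝ := fun i => ∑ j, A i (r.succAbove j) with hsdef
  have hε : ∃ ε : ℝ, 0 < ε ∧ ∀ i, 0 < A.mulVec v i + ε * s i := by
    rcases isEmpty_or_nonempty (Fin n) with hn | hn
    · exact ⟨1, one_pos, fun i => hn.elim i⟩
    · refine ⟨Finset.univ.inf' Finset.univ_nonempty
        (fun i => A.mulVec v i / (1 + |s i|)), ?_, ?_⟩
      · apply Finset.lt_inf'_iff _ |>.mpr
        intro i _
        exact div_pos (hAv i) (by positivity)
      · intro i
        set ε := Finset.univ.inf' Finset.univ_nonempty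
          (fun i => A.mulVec v i / (1 + |s i|)) with hεdef
        have hεpos : 0 < ε := by
          apply Finset.lt_inf'_iff _ |>.mpr
          intro i _
          exact div_pos (hAv i) (by positivity)
        have hle : ε ≤ A.mulVec v i / (1 + |s i|) :=
          Finset.inf'_le _ (Finset.mem_univ i)
        have h1 : ε * (1 + |s i|) ≤ A.mulVec v i := by
          rw [div_eq_mul_inv] at hle
          have h0 : (0:ℝ) < 1 + |s i| := by positivity
          calc ε * (1 + |s i|) ≤ (A.mulVec v i * (1 + |s i|)⁻¹) * (1 + |s i|) := by
                apply mul_le_mul_of_nonneg_right hle h0.le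
            _ = A.mulVec v i := by field_simp
        have h2 : ε * (-s i) ≤ ε * |s i| :=
          mul_le_mul_of_nonneg_left (neg_le_abs _) hεpos.le
        nlinarith [abs_nonneg (s i)]
  obtain ⟨ε, hεpos, hεlt⟩ := hε
  refine ⟨r, fun j => u (r.succAbove j) + ε, fun j => ?_, fun i => ?_⟩
  · have := hunn (r.succAbove j)
    show 0 < u (r.succAbove j) + ε
    linarith
  · have : (A.submatrix id r.succAbove).mulVec (fun j => u (r.succAbove j) + ε) i
        = A.mulVec v i + ε * s i := by
      simp only [Matrix.mulVec, dotProduct, Matrix.submatrix_apply, id] at key ⊢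
      simp only [mul_add, Finset.sum_add_distrib]
      rw [key i]
      simp [hsdef, Finset.mul_sum, mul_comm]
    rw [this]
    exact hεlt i
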